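/- For every integer n ≥ 5, the direct product K₂ × K_n is super restricted edge-connected; that is, every minimum restricted edge-cut of K₂ × K_n is exactly the set of edges incident with exactly one endpoint of some single edge (its removal isolates an edge). -/

import Mathlib

open SimpleGraph

/-- The direct (tensor/Kronecker) product of two simple graphs:
`(u₁, v₁)` and `(u₂, v₂)` are adjacent iff `u₁u₂ ∈ E(G)` and `v₁v₂ ∈ E(H)`. -/
def tensorProd {α β : Type*} (G : SimpleGraph α) (H : SimpleGraph β) :
    SimpleGraph (α × β) where
  Adj x y := G.Adj x.1 y.1 ∧ H.Adj x.2 y.2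
  symm := ⟨fun _ _ h => ⟨h.1.symm, h.2.symm⟩⟩
  loopless := ⟨fun _ h => G.loopless.irrefl _ h.1⟩

/-- The direct product `G × Tₙ` of a simple graph `G` with the total graph `Tₙ`
(the complete graph `Kₙ` with a loop added at every vertex):  since `Tₙ` has all
possible edges and loops, `(u₁, v₁)` is adjacent to `(u₂, v₂)` iff `u₁u₂ ∈ E(G)`. -/
def totalProd {α : Type*} (G : SimpleGraph α) (n : ℕ) :
    SimpleGraph (α × Fin n) where
  Adj x y := G.Adj x.1 y.1
  symm := ⟨fun _ _ h => h.symm⟩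
  loopless := ⟨fun _ h => G.loopless.irrefl _ h⟩

/-- The direct product `K₂ × Kₙ`. -/
def K2timesKn (n : ℕ) : SimpleGraph (Fin 2 × Fin n) :=
  tensorProd (completeGraph (Fin 2)) (completeGraph (Fin n))

/-- The direct product `K₂ × Tₙ` (isomorphic to the complete bipartite graph `K_{n,n}`). -/
def K2timesTn (n : ℕ) : SimpleGraph (Fin 2 × Fin n) :=
  totalProd (completeGraph (Fin 2)) n

/-- `[A, V ∖ A]` : the set of edges of `G` with exactly one endpoint in `A`. -/
def cutEdges {α : Type*} (G : SimpleGraph α) (A : Set α) : Set (Sym2 α) :=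
  {e | e ∈ G.edgeSet ∧ ∃ u v, e = s(u, v) ∧ u ∈ A ∧ v ∉ A}

/-- `F` is an edge-cut of `G`: a set of edges whose deletion disconnects `G`. -/
def IsEdgeCut {α : Type*} (G : SimpleGraph α) (F : Set (Sym2 α)) : Prop :=
  F ⊆ G.edgeSet ∧ ¬ (G.deleteEdges F).Connected

/-- The edge-connectivity `λ(G)`: the minimum cardinality of an edge-cut. -/
noncomputable def edgeConn {α : Type*} (G : SimpleGraph α) : ℕ :=
  sInf {k | ∃ F : Finset (Sym2 α), IsEdgeCut G ↑F ∧ F.card = k}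

/-- `G` is super edge-connected (super-λ): every minimum edge-cut is exactly the
set of edges incident with some vertex. -/
def SuperEdgeConnected {α : Type*} (G : SimpleGraph α) : Prop :=
  ∀ F : Finset (Sym2 α), IsEdgeCut G ↑F → F.card = edgeConn G →
    ∃ v, (F : Set (Sym2 α)) = G.incidenceSet v

/-- `F` is a restricted edge-cut of `G`: its deletion disconnects `G` and every
connected component of `G − F` has at least two vertices. -/
def IsRestrictedEdgeCut {α : Type*} (G : SimpleGraph α) (F : Set (Sym2 α)) : Prop :=
  F ⊆ G.edgeSet ∧ ¬ (G.deleteEdges F).Connected ∧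
    ∀ c : (G.deleteEdges F).ConnectedComponent, c.supp.Nontrivial

/-- The restricted edge-connectivity `λ'(G) : ℕ∞`: the minimum cardinality of a
restricted edge-cut, and `+∞` (`⊤`) if no restricted edge-cut exists. -/
noncomputable def restrictedEdgeConn {α : Type*} (G : SimpleGraph α) : ℕ∞ :=
  sInf {k : ℕ∞ | ∃ F : Finset (Sym2 α), IsRestrictedEdgeCut G ↑F ∧ (F.card : ℕ∞) = k}

/-- `G` is super restricted edge-connected (super-λ'): every minimum restricted
edge-cut isolates an edge, i.e. some component of `G − F` is a single edge. -/
def SuperRestrictedEdgeConnected {α : Type*} (G : SimpleGraph α) : Prop :=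
  ∀ F : Finset (Sym2 α), IsRestrictedEdgeCut G ↑F →
    (F.card : ℕ∞) = restrictedEdgeConn G →
    ∃ u v, (G.deleteEdges ↑F).Adj u v ∧
      ((G.deleteEdges ↑F).connectedComponentMk u).supp = {u, v}

/-- The minimum edge-degree `ξ(G) = min { d(u) + d(v) − 2 : uv ∈ E(G) }`. -/
noncomputable def minEdgeDegree {α : Type*} (G : SimpleGraph α) : ℕ :=
  sInf {k | ∃ u v, G.Adj u v ∧ (G.neighborSet u).ncard + (G.neighborSet v).ncard - 2 = k}

open Finset in
lemma K2Kn_adj {n : ℕ} {x y : Fin 2 × Fin n} :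
    (K2timesKn n).Adj x y ↔ x.1 ≠ y.1 ∧ x.2 ≠ y.2 := Iff.rfl

lemma fin2_eq_one_of_ne {j : Fin 2} (h : j ≠ 0) : j = 1 := by fin_cases j <;> simp_all

lemma reach_closed {V : Type*} {G : SimpleGraph V} {S : Set V}
    (hS : ∀ x ∈ S, ∀ y, G.Adj x y → y ∈ S) {u v : V}
    (h : G.Reachable u v) (hu : u ∈ S) : v ∈ S := by
  obtain ⟨w⟩ := h
  induction w with
  | nil => exact hu
  | cons h p ih => exact ih (hS _ hu _ h)
lemma int_key (n p q t : ℤ) (hn : 5 ≤ n) (hp : 0 ≤ p) (hq : 0 ≤ q)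
    (hpn : p ≤ n) (hqn : q ≤ n) (ht0 : 0 ≤ t) (htp : t ≤ p) (htq : t ≤ q)
    (htpq : p + q ≤ n + t) (hs2 : 2 ≤ p + q) (hs : p + q ≤ 2*n - 2) :
    2*n - 4 ≤ p*(n - q) + q*(n - p) - (p - t) - (q - t) ∧
    (p*(n-q) + q*(n-p) - (p-t) - (q-t) = 2*n-4 →
      (p = 1 ∧ q = 1 ∧ t = 0) ∨ (p = n-1 ∧ q = n-1 ∧ t = n-2)) := by
  rcases le_or_gt (p + q) (2*n - 4) with hc | hc
  · have hid : (p-q)^2 + (p+q-2)*(2*n-4-(p+q)) + 4*t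
        = 2*((p*(n-q)+q*(n-p)-(p-t)-(q-t)) - (2*n-4)) := by ring
    have h1 : 0 ≤ (p + q - 2) * (2*n - 4 - (p + q)) :=
      mul_nonneg (by linarith) (by linarith)
    constructor
    · nlinarith [sq_nonneg (p - q)]
    · intro he
      rw [he] at hid
      have e1 : (p-q)^2 = 0 := le_antisymm (by linarith) (sq_nonneg _)
      have e2 : (p+q-2)*(2*n-4-(p+q)) = 0 := le_antisymm (by nlinarith [sq_nonneg (p-q)]) h1
      have e3 : t = 0 := by linarith
      have e4 : p = q := by have := sq_eq_zero_iff.1 e1; linarith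
      rcases mul_eq_zero.1 e2 with h | h
      · left; refine ⟨by linarith, by linarith, e3⟩
      · exfalso; linarith
  · have hgt : 0 ≤ t - (p + q - n) := by linarith
    have hid : (p-q)^2 + (p+q-4)*(2*n-2-(p+q)) + 4*(t-(p+q-n))
        = 2*((p*(n-q)+q*(n-p)-(p-t)-(q-t)) - (2*n-4)) := by ring
    have h1 : 0 ≤ (p + q - 4) * (2*n - 2 - (p + q)) :=
      mul_nonneg (by linarith) (by linarith)
    constructor
    · nlinarith [sq_nonneg (p - q)]
    · intro he
      rw [he] at hid
      have e1 : (p-q)^2 = 0 := le_antisymm (by linarith) (sq_nonneg _)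
      have e2 : (p+q-4)*(2*n-2-(p+q)) = 0 := le_antisymm (by nlinarith [sq_nonneg (p-q)]) h1
      have e3 : t = p + q - n := by linarith
      have e4 : p = q := by have := sq_eq_zero_iff.1 e1; linarith
      rcases mul_eq_zero.1 e2 with h | h
      · exfalso; linarith
      · right; refine ⟨by linarith, by linarith, by linarith⟩
open Finset in
lemma sum_split {n : ℕ} (A : Finset (Fin 2 × Fin n)) (f : Fin 2 × Fin n → ℕ) :
    ∑ x ∈ A, f x
      = ∑ a ∈ univ.filter (fun a => ((0:Fin 2),a) ∈ A), f (0,a)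
        + ∑ a ∈ univ.filter (fun a => ((1:Fin 2),a) ∈ A), f (1,a) := by
  rw [sum_filter, sum_filter]
  rw [← Fin.sum_univ_two (f := fun i => ∑ a : Fin n, if ((i:Fin 2),a) ∈ A then f (i,a) else 0)]
  rw [← Fintype.sum_prod_type (f := fun x : Fin 2 × Fin n => if x ∈ A then f x else 0)]
  rw [← Finset.sum_filter]
  congr 1
  simp [Finset.filter_mem_eq_inter]
lemma fin2_ne_iff {i j : Fin 2} : i ≠ j ↔ j = i + 1 := by revert i j; decide

open Finset in
open scoped Classical in
lemma inner_count {n : ℕ} (A : Finset (Fin 2 × Fin n)) (i : Fin 2) (a : Fin n) :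
    (Aᶜ.filter fun y => (K2timesKn n).Adj (i,a) y).card
      = (((univ.filter (fun b => ((i+1:Fin 2),b) ∈ A))ᶜ : Finset (Fin n)) \ {a}).card := by
  have hset : (Aᶜ.filter fun y => (K2timesKn n).Adj (i,a) y)
      = (((univ.filter (fun b => ((i+1:Fin 2),b) ∈ A))ᶜ : Finset (Fin n)) \ {a}).image
          (fun b => ((i+1 : Fin 2), b)) := by
    ext ⟨j, b⟩
    simp only [mem_image, mem_sdiff, mem_compl, mem_filter, mem_univ, true_and,
      K2Kn_adj, mem_singleton, Prod.mk.injEq]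
    constructor
    · rintro ⟨hyA, hj, hb⟩
      have hj' : j = i + 1 := fin2_ne_iff.1 hj
      exact ⟨b, ⟨by rwa [← hj'], fun h => hb h.symm⟩, hj'.symm, rfl⟩
    · rintro ⟨b', ⟨hb'A, hb'a⟩, rfl, rfl⟩
      exact ⟨by simpa using hb'A, fin2_ne_iff.2 rfl, fun h => hb'a h.symm⟩
  rw [hset, Finset.card_image_of_injective _ (fun b b' h => (Prod.ext_iff.1 h).2)]
open Finset in
lemma sum_sdiff_singleton {n : ℕ} (s u : Finset (Fin n)) :
    ∑ a ∈ s, (u \ {a}).card + (s ∩ u).card = s.card * u.card := by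
  have hpt : ∀ a, (u \ {a}).card + (if a ∈ u then 1 else 0) = u.card := by
    intro a
    by_cases h : a ∈ u
    · simp only [h, if_true, sdiff_singleton_eq_erase]
      exact Finset.card_erase_add_one h
    · have : u \ {a} = u := by
        apply Finset.sdiff_eq_self_of_disjoint
        simp [h]
      simp [this, h]
  calc ∑ a ∈ s, (u \ {a}).card + (s ∩ u).card
      = ∑ a ∈ s, (u \ {a}).card + ∑ a ∈ s, (if a ∈ u then 1 else 0) := by
        rw [← Finset.card_filter, Finset.filter_mem_eq_inter]
    _ = ∑ a ∈ s, ((u \ {a}).card + (if a ∈ u then 1 else 0)) := (Finset.sum_add_distrib).symm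
    _ = ∑ a ∈ s, u.card := by simp_rw [hpt]
    _ = s.card * u.card := by rw [Finset.sum_const, smul_eq_mul]
lemma fin2_cases (i : Fin 2) : i = 0 ∨ i = 1 := by revert i; decide

open Finset in
open scoped Classical in
lemma count_main {n : ℕ} (hn : 5 ≤ n) (A : Finset (Fin 2 × Fin n))
    (h2 : 2 ≤ A.card) (h2c : 2 ≤ Aᶜ.card) :
    2*n - 4 ≤ ((A ×ˢ Aᶜ).filter fun z => (K2timesKn n).Adj z.1 z.2).card ∧
    (((A ×ˢ Aᶜ).filter fun z => (K2timesKn n).Adj z.1 z.2).card ≤ 2*n - 4 →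
      ∃ u v, (K2timesKn n).Adj u v ∧ (A = {u,v} ∨ Aᶜ = {u,v})) := by
  have hA₀ : (univ.filter (fun a => ((0:Fin 2),a) ∈ A)) = univ.filter (fun a => ((0:Fin 2),a) ∈ A) := rfl
  generalize hA0 : (univ.filter (fun a => ((0:Fin 2),a) ∈ A) : Finset (Fin n)) = A₀ at *
  generalize hA1 : (univ.filter (fun a => ((1:Fin 2),a) ∈ A) : Finset (Fin n)) = A₁ at *
  -- counting D
  have hDsum : ((A ×ˢ Aᶜ).filter fun z => (K2timesKn n).Adj z.1 z.2).card
      = ∑ x ∈ A, (Aᶜ.filter fun y => (K2timesKn n).Adj x y).card := by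
    rw [Finset.card_filter, Finset.sum_product]
    exact Finset.sum_congr rfl fun x _ => (Finset.card_filter _ _).symm
  have hf0 : ∀ a : Fin n, (Aᶜ.filter fun y => (K2timesKn n).Adj ((0:Fin 2),a) y).card
      = (A₁ᶜ \ {a}).card := by
    intro a
    rw [inner_count A 0 a]
    have h01 : ((0:Fin 2)+1) = 1 := by decide
    rw [h01, hA1]
  have hf1 : ∀ a : Fin n, (Aᶜ.filter fun y => (K2timesKn n).Adj ((1:Fin 2),a) y).card
      = (A₀ᶜ \ {a}).card := by
    intro a
    rw [inner_count A 1 a]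
    have h01 : ((1:Fin 2)+1) = 0 := by decide
    rw [h01, hA0]
  have hDcount : ((A ×ˢ Aᶜ).filter fun z => (K2timesKn n).Adj z.1 z.2).card
        + (A₀ ∩ A₁ᶜ).card + (A₁ ∩ A₀ᶜ).card
      = A₀.card * A₁ᶜ.card + A₁.card * A₀ᶜ.card := by
    rw [hDsum, sum_split A _, hA0, hA1]
    simp_rw [hf0, hf1]
    have e0 := sum_sdiff_singleton A₀ A₁ᶜ
    have e1 := sum_sdiff_singleton A₁ A₀ᶜ
    omega
  have hcards : A.card = A₀.card + A₁.card := by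
    have := sum_split A (fun _ => 1)
    rw [hA0, hA1] at this
    simpa using this
  have hAc : Aᶜ.card = 2*n - A.card := by
    rw [Finset.card_compl]
    congr 1
    simp [Fintype.card_prod]
  have hpn : A₀.card ≤ n := by simpa using (Finset.card_le_univ A₀)
  have hqn : A₁.card ≤ n := by simpa using (Finset.card_le_univ A₁)
  have htp : (A₀ ∩ A₁).card ≤ A₀.card := Finset.card_le_card (Finset.inter_subset_left)
  have htq : (A₀ ∩ A₁).card ≤ A₁.card := Finset.card_le_card (Finset.inter_subset_right)
  have hun : (A₀ ∪ A₁).card ≤ n := by simpa using (Finset.card_le_univ (A₀ ∪ A₁))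
  have huni : (A₀ ∪ A₁).card + (A₀ ∩ A₁).card = A₀.card + A₁.card :=
    Finset.card_union_add_card_inter A₀ A₁
  have hA₁c : A₁ᶜ.card = n - A₁.card := by simp [Finset.card_compl]
  have hA₀c : A₀ᶜ.card = n - A₀.card := by simp [Finset.card_compl]
  have hd1 : (A₀ ∩ A₁ᶜ).card + (A₀ ∩ A₁).card = A₀.card := by
    have h' : A₀ ∩ A₁ᶜ = A₀ \ A₁ := by ext a; simp
    rw [h']
    exact Finset.card_sdiff_add_card_inter A₀ A₁
  have hd2 : (A₁ ∩ A₀ᶜ).card + (A₀ ∩ A₁).card = A₁.card := by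
    have h' : A₁ ∩ A₀ᶜ = A₁ \ A₀ := by ext a; simp
    rw [h', Finset.inter_comm A₀ A₁]
    exact Finset.card_sdiff_add_card_inter A₁ A₀
  -- integer form
  have hDint : ((((A ×ˢ Aᶜ).filter fun z => (K2timesKn n).Adj z.1 z.2).card) : ℤ)
      = (A₀.card:ℤ)*((n:ℤ) - A₁.card) + (A₁.card:ℤ)*((n:ℤ) - A₀.card)
        - ((A₀.card:ℤ)-(A₀ ∩ A₁).card) - ((A₁.card:ℤ)-(A₀ ∩ A₁).card) := by
    have h3 : ((A₁ᶜ.card) : ℤ) = (n:ℤ) - A₁.card := by omega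
    have h4 : ((A₀ᶜ.card) : ℤ) = (n:ℤ) - A₀.card := by omega
    have hcast : ((((A ×ˢ Aᶜ).filter fun z => (K2timesKn n).Adj z.1 z.2).card) : ℤ)
          + ((A₀ ∩ A₁ᶜ).card : ℤ) + ((A₁ ∩ A₀ᶜ).card : ℤ)
        = (A₀.card:ℤ) * (A₁ᶜ.card : ℤ) + (A₁.card:ℤ) * (A₀ᶜ.card : ℤ) := by
      exact_mod_cast congrArg (Nat.cast : ℕ → ℤ) hDcount
    rw [h3, h4] at hcast
    have h5 : ((A₀ ∩ A₁ᶜ).card : ℤ) = (A₀.card:ℤ) - (A₀ ∩ A₁).card := by omega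
    have h6 : ((A₁ ∩ A₀ᶜ).card : ℤ) = (A₁.card:ℤ) - (A₀ ∩ A₁).card := by omega
    rw [h5, h6] at hcast
    linarith
  have key := int_key (n:ℤ) A₀.card A₁.card (A₀ ∩ A₁).card (by exact_mod_cast hn)
    (by positivity) (by positivity)
    (by exact_mod_cast hpn) (by exact_mod_cast hqn) (by positivity)
    (by exact_mod_cast htp) (by exact_mod_cast htq)
    (by exact_mod_cast (by omega : A₀.card + A₁.card ≤ n + (A₀ ∩ A₁).card))
    (by exact_mod_cast (hcards ▸ h2 : 2 ≤ A₀.card + A₁.card))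
    (by omega)
  constructor
  · omega
  · intro hle
    have heq : (A₀.card:ℤ)*((n:ℤ)-A₁.card) + (A₁.card:ℤ)*((n:ℤ)-A₀.card)
        - ((A₀.card:ℤ)-(A₀ ∩ A₁).card) - ((A₁.card:ℤ)-(A₀ ∩ A₁).card) = 2*(n:ℤ)-4 := by omega
    have h0 : ∀ c : Fin n, (((0:Fin 2), c) ∈ A ↔ c ∈ A₀) := by
      intro c; rw [← hA0]; simp
    have h1 : ∀ c : Fin n, (((1:Fin 2), c) ∈ A ↔ c ∈ A₁) := by
      intro c; rw [← hA1]; simp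
    rcases key.2 heq with ⟨hp1, hq1, ht0⟩ | ⟨hp1, hq1, ht1⟩
    · -- A is an edge
      have hp' : A₀.card = 1 := by omega
      have hq' : A₁.card = 1 := by omega
      have ht' : (A₀ ∩ A₁).card = 0 := by omega
      obtain ⟨a, ha⟩ := Finset.card_eq_one.1 hp'
      obtain ⟨b, hb⟩ := Finset.card_eq_one.1 hq'
      have hab : a ≠ b := by
        intro h
        have : a ∈ A₀ ∩ A₁ := by rw [ha, hb, ← h]; simp
        rw [Finset.card_eq_zero.1 ht'] at this
        simp at this
      refine ⟨((0:Fin 2),a), ((1:Fin 2),b), K2Kn_adj.mpr ⟨show ((0:Fin 2)) ≠ (1:Fin 2) by decide, hab⟩, Or.inl ?_⟩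
      ext ⟨i, c⟩
      rcases fin2_cases i with rfl | rfl
      · simp only [Finset.mem_insert, Finset.mem_singleton, Prod.mk.injEq]
        rw [h0 c, ha]
        simp [(by decide : (0:Fin 2) ≠ 1)]
      · simp only [Finset.mem_insert, Finset.mem_singleton, Prod.mk.injEq]
        rw [h1 c, hb]
        simp [(by decide : (1:Fin 2) ≠ 0)]
    · -- complement is an edge
      have hc0 : A₀ᶜ.card = 1 := by omega
      have hc1 : A₁ᶜ.card = 1 := by omega
      obtain ⟨a, ha⟩ := Finset.card_eq_one.1 hc0
      obtain ⟨b, hb⟩ := Finset.card_eq_one.1 hc1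
      have huniv : A₀ ∪ A₁ = univ := Finset.eq_univ_of_card _ (by simp; omega)
      have haA1 : a ∈ A₁ := by
        have hmem : a ∈ A₀ ∪ A₁ := huniv ▸ Finset.mem_univ a
        rcases Finset.mem_union.1 hmem with h | h
        · exfalso
          have : a ∈ A₀ᶜ := ha ▸ Finset.mem_singleton_self a
          exact (Finset.mem_compl.1 this) h
        · exact h
      have hbA1 : b ∉ A₁ := Finset.mem_compl.1 (hb ▸ Finset.mem_singleton_self b)
      have hab : a ≠ b := fun h => hbA1 (h ▸ haA1)
      refine ⟨((0:Fin 2),a), ((1:Fin 2),b), K2Kn_adj.mpr ⟨show ((0:Fin 2)) ≠ (1:Fin 2) by decide, hab⟩, Or.inr ?_⟩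
      ext ⟨i, c⟩
      rcases fin2_cases i with rfl | rfl
      · simp only [Finset.mem_insert, Finset.mem_singleton, Prod.mk.injEq, Finset.mem_compl]
        rw [h0 c]
        have hcc : c ∉ A₀ ↔ c ∈ A₀ᶜ := (Finset.mem_compl).symm
        rw [hcc, ha]
        simp [(by decide : (0:Fin 2) ≠ 1)]
      · simp only [Finset.mem_insert, Finset.mem_singleton, Prod.mk.injEq, Finset.mem_compl]
        rw [h1 c]
        have hcc : c ∉ A₁ ↔ c ∈ A₁ᶜ := (Finset.mem_compl).symm
        rw [hcc, hb]
        simp [(by decide : (1:Fin 2) ≠ 0)]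
open Finset in
open scoped Classical in
lemma upper_bound {n : ℕ} (hn : 5 ≤ n) :
    restrictedEdgeConn (K2timesKn n) ≤ ((2*n - 4 : ℕ) : ℕ∞) := by
  have h01 : ¬((0:Fin 2) = 1) := by decide
  have h10 : ¬((1:Fin 2) = 0) := by decide
  let a₀ : Fin n := ⟨0, by omega⟩
  let a₁ : Fin n := ⟨1, by omega⟩
  let a₂ : Fin n := ⟨2, by omega⟩
  have ha01 : a₀ ≠ a₁ := by simp [a₀, a₁, Fin.ext_iff]
  let u₀ : Fin 2 × Fin n := (0, a₀)
  let v₀ : Fin 2 × Fin n := (1, a₁)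
  have huv : u₀ ≠ v₀ := fun h => h01 (congrArg Prod.fst h)
  let B : Finset (Fin n) := ({a₀, a₁} : Finset (Fin n))ᶜ
  have hBmem : ∀ b, b ∈ B ↔ b ≠ a₀ ∧ b ≠ a₁ := by
    intro b; simp [B]
  let f : Fin n → Sym2 (Fin 2 × Fin n) := fun b => s(u₀, ((1:Fin 2), b))
  let g : Fin n → Sym2 (Fin 2 × Fin n) := fun b => s(v₀, ((0:Fin 2), b))
  let F₀ : Finset (Sym2 (Fin 2 × Fin n)) := B.image f ∪ B.image g
  have hF₀mem : ∀ e, e ∈ F₀ ↔ ∃ b ∈ B, e = f b ∨ e = g b := by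
    intro e
    simp only [F₀, mem_union, mem_image]
    constructor
    · rintro (⟨b, hb, rfl⟩ | ⟨b, hb, rfl⟩)
      exacts [⟨b, hb, Or.inl rfl⟩, ⟨b, hb, Or.inr rfl⟩]
    · rintro ⟨b, hb, rfl | rfl⟩
      exacts [Or.inl ⟨b, hb, rfl⟩, Or.inr ⟨b, hb, rfl⟩]
  -- F₀ is a set of edges
  have hsub : (F₀ : Set (Sym2 (Fin 2 × Fin n))) ⊆ (K2timesKn n).edgeSet := by
    intro e he
    rw [Finset.mem_coe, hF₀mem] at he
    obtain ⟨b, hb, rfl | rfl⟩ := he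
    · exact K2Kn_adj.mpr ⟨h01, ((hBmem b).1 hb).1.symm⟩
    · exact K2Kn_adj.mpr ⟨h10, ((hBmem b).1 hb).2.symm⟩
  -- the edge u₀v₀ survives
  have hedge : ((K2timesKn n).deleteEdges ↑F₀).Adj u₀ v₀ := by
    rw [SimpleGraph.deleteEdges_adj]
    refine ⟨K2Kn_adj.mpr ⟨h01, ha01⟩, ?_⟩
    rw [Finset.mem_coe, hF₀mem]
    rintro ⟨b, hb, h | h⟩
    · rcases Sym2.eq_iff.1 h with ⟨-, h2⟩ | ⟨h1, -⟩
      · exact ((hBmem b).1 hb).2 (congrArg Prod.snd h2).symm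
      · exact h01 (congrArg Prod.fst h1)
    · rcases Sym2.eq_iff.1 h with ⟨h1, -⟩ | ⟨h1, -⟩
      · exact huv h1
      · exact ((hBmem b).1 hb).1 (congrArg Prod.snd h1).symm
  -- edges missing u₀ and v₀ survive
  have houts : ∀ x y : Fin 2 × Fin n, x ≠ u₀ → x ≠ v₀ → y ≠ u₀ → y ≠ v₀ →
      (K2timesKn n).Adj x y → ((K2timesKn n).deleteEdges ↑F₀).Adj x y := by
    intro x y hx1 hx2 hy1 hy2 hadj
    rw [SimpleGraph.deleteEdges_adj]
    refine ⟨hadj, ?_⟩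
    rw [Finset.mem_coe, hF₀mem]
    rintro ⟨b, hb, h | h⟩
    · rcases Sym2.eq_iff.1 h with ⟨h1, -⟩ | ⟨-, h2⟩
      · exact hx1 h1
      · exact hy1 h2
    · rcases Sym2.eq_iff.1 h with ⟨h1, -⟩ | ⟨-, h2⟩
      · exact hx2 h1
      · exact hy2 h2
  -- the pair {u₀, v₀} is closed under adjacency in the reduced graph
  have hclose : ∀ x ∈ ({u₀, v₀} : Set (Fin 2 × Fin n)), ∀ y,
      ((K2timesKn n).deleteEdges ↑F₀).Adj x y → y ∈ ({u₀, v₀} : Set (Fin 2 × Fin n)) := by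
    rintro x hx ⟨j, b⟩ hadj
    rw [SimpleGraph.deleteEdges_adj] at hadj
    obtain ⟨hadj, hnf⟩ := hadj
    rw [Finset.mem_coe, hF₀mem] at hnf
    rcases hx with rfl | rfl
    · have hj : j = 1 := fin2_eq_one_of_ne (fun h => hadj.1 h.symm)
      subst hj
      by_contra hy
      simp only [Set.mem_insert_iff, Set.mem_singleton_iff] at hy
      push_neg at hy
      have hb1 : b ≠ a₁ := fun h => hy.2 (by rw [h])
      have hb0 : b ≠ a₀ := fun h => hadj.2 h.symm
      exact hnf ⟨b, (hBmem b).2 ⟨hb0, hb1⟩, Or.inl rfl⟩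
    · have hj : j = 0 := by
        rcases fin2_cases j with h | h
        · exact h
        · exact absurd h.symm hadj.1
      subst hj
      by_contra hy
      simp only [Set.mem_insert_iff, Set.mem_singleton_iff] at hy
      push_neg at hy
      have hb0 : b ≠ a₀ := fun h => hy.1 (by rw [h])
      have hb1 : b ≠ a₁ := fun h => hadj.2 h.symm
      exact hnf ⟨b, (hBmem b).2 ⟨hb0, hb1⟩, Or.inr rfl⟩
  -- disconnected
  have hdisc : ¬ ((K2timesKn n).deleteEdges ↑F₀).Connected := by
    intro hconn
    have hreach := hconn.preconnected u₀ ((0 : Fin 2), a₂)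
    have hmem := reach_closed hclose hreach (Or.inl rfl)
    rcases hmem with h | h
    · exact absurd (congrArg (fun z => z.2.val) h) (show ¬((2:ℕ) = (0:ℕ)) by decide)
    · exact h01 (congrArg Prod.fst h)
  -- all components nontrivial
  have hii : ∀ k : Fin 2, k ≠ k + 1 := by decide
  have hnt : ∀ c : ((K2timesKn n).deleteEdges ↑F₀).ConnectedComponent, c.supp.Nontrivial := by
    apply SimpleGraph.ConnectedComponent.ind
    intro x
    by_cases hx : x = u₀ ∨ x = v₀
    · have hcc : ((K2timesKn n).deleteEdges ↑F₀).connectedComponentMk u₀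
          = ((K2timesKn n).deleteEdges ↑F₀).connectedComponentMk v₀ :=
        SimpleGraph.ConnectedComponent.eq.2 hedge.reachable
      rcases hx with rfl | rfl
      · exact ⟨u₀, (SimpleGraph.ConnectedComponent.mem_supp_iff _ _).2 rfl,
          v₀, (SimpleGraph.ConnectedComponent.mem_supp_iff _ _).2 hcc.symm, huv⟩
      · exact ⟨u₀, (SimpleGraph.ConnectedComponent.mem_supp_iff _ _).2 hcc,
          v₀, (SimpleGraph.ConnectedComponent.mem_supp_iff _ _).2 rfl, huv⟩
    · push_neg at hx
      obtain ⟨i, a⟩ := x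
      have hBig : (({a₀, a₁, a} : Finset (Fin n))ᶜ).Nonempty := by
        rw [← Finset.card_pos, Finset.card_compl]
        have h3 : ({a₀, a₁, a} : Finset (Fin n)).card ≤ 3 := by
          apply le_trans (Finset.card_insert_le _ _)
          have := Finset.card_insert_le a₁ ({a} : Finset (Fin n))
          simp at this ⊢
          omega
        simp only [Fintype.card_fin]
        omega
      obtain ⟨b, hb⟩ := hBig
      simp only [Finset.mem_compl, Finset.mem_insert, Finset.mem_singleton, not_or] at hb
      obtain ⟨hb0, hb1, hba⟩ := hb
      have hyu : ((i + 1 : Fin 2), b) ≠ u₀ := fun h => hb0 (congrArg Prod.snd h)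
      have hyv : ((i + 1 : Fin 2), b) ≠ v₀ := fun h => hb1 (congrArg Prod.snd h)
      have hadj : ((K2timesKn n).deleteEdges ↑F₀).Adj (i, a) ((i + 1 : Fin 2), b) :=
        houts _ _ hx.1 hx.2 hyu hyv
          (K2Kn_adj.mpr ⟨hii i, fun h => hba h.symm⟩)
      refine ⟨(i, a), ?_, ((i + 1 : Fin 2), b), ?_, ?_⟩
      · exact SimpleGraph.ConnectedComponent.mem_supp_iff _ _ |>.2 rfl
      · exact SimpleGraph.ConnectedComponent.mem_supp_iff _ _ |>.2
          (SimpleGraph.ConnectedComponent.eq.2 hadj.symm.reachable)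
      · intro h
        exact hba (congrArg Prod.snd h).symm
  -- cardinality
  have hcard : F₀.card = 2*n - 4 := by
    have hinjf : Set.InjOn f B := by
      intro b _ b' _ h
      rcases Sym2.eq_iff.1 h with ⟨-, h2⟩ | ⟨h1, -⟩
      · exact congrArg Prod.snd h2
      · exact absurd (congrArg Prod.fst h1) h01
    have hinjg : Set.InjOn g B := by
      intro b _ b' _ h
      rcases Sym2.eq_iff.1 h with ⟨-, h2⟩ | ⟨h1, -⟩
      · exact congrArg Prod.snd h2
      · exact absurd (congrArg Prod.fst h1) h10
    have hdisj : Disjoint (B.image f) (B.image g) := by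
      rw [Finset.disjoint_left]
      rintro e he hg
      obtain ⟨b, hb, rfl⟩ := Finset.mem_image.1 he
      obtain ⟨b', hb', heq⟩ := Finset.mem_image.1 hg
      rcases Sym2.eq_iff.1 heq with ⟨h1, -⟩ | ⟨-, h2⟩
      · exact huv h1.symm
      · exact ((hBmem b').1 hb').1 (congrArg Prod.snd h2)
    have hBcard : B.card = n - 2 := by
      rw [Finset.card_compl, Finset.card_pair ha01, Fintype.card_fin]
    rw [Finset.card_union_of_disjoint hdisj, Finset.card_image_of_injOn hinjf,
      Finset.card_image_of_injOn hinjg, hBcard]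
    omega
  -- conclude
  apply sInf_le
  exact ⟨F₀, ⟨hsub, hdisc, hnt⟩, by rw [hcard]⟩
open Finset
open scoped Classical
theorem stmt2 (n : ℕ) (hn : 5 ≤ n) : SuperRestrictedEdgeConnected (K2timesKn n) := by
  intro F hF hcard
  obtain ⟨hFsub, hFdisc, hFnt⟩ := hF
  have hle : F.card ≤ 2*n - 4 := by
    have h1 : (F.card : ℕ∞) ≤ ((2*n-4 : ℕ) : ℕ∞) := by
      rw [hcard]; exact upper_bound hn
    exact_mod_cast h1
  -- a component and a vertex outside it
  have hxy : ∃ x y : Fin 2 × Fin n, ¬ ((K2timesKn n).deleteEdges ↑F).Reachable x y := by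
    by_contra h
    push_neg at h
    haveI : Nonempty (Fin 2 × Fin n) := ⟨((0 : Fin 2), ⟨0, by omega⟩)⟩
    exact hFdisc ⟨fun u v => h u v⟩
  obtain ⟨x, y, hxy⟩ := hxy
  set G' := (K2timesKn n).deleteEdges ↑F with hG'
  set c := G'.connectedComponentMk x with hc
  set A : Finset (Fin 2 × Fin n) := Finset.univ.filter (· ∈ c.supp) with hA
  have hAmem : ∀ z, z ∈ A ↔ G'.connectedComponentMk z = c := by
    intro z; simp [hA, SimpleGraph.ConnectedComponent.mem_supp_iff]
  have h2 : 2 ≤ A.card := by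
    obtain ⟨w1, hw1, w2, hw2, hww⟩ := hFnt c
    exact Finset.one_lt_card.2 ⟨w1, (hAmem w1).2 hw1, w2, (hAmem w2).2 hw2, hww⟩
  have h2c : 2 ≤ Aᶜ.card := by
    obtain ⟨w1, hw1, w2, hw2, hww⟩ := hFnt (G'.connectedComponentMk y)
    have hnot : ∀ z, z ∈ (G'.connectedComponentMk y).supp → z ∈ Aᶜ := by
      intro z hz
      rw [Finset.mem_compl, hAmem]
      intro hzc
      rw [SimpleGraph.ConnectedComponent.mem_supp_iff] at hz
      rw [hz] at hzc
      have hyx : G'.connectedComponentMk y = G'.connectedComponentMk x := hzc.trans hc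
      exact hxy (SimpleGraph.ConnectedComponent.eq.1 hyx).symm
    exact Finset.one_lt_card.2 ⟨w1, hnot w1 hw1, w2, hnot w2 hw2, hww⟩
  -- the crossing pairs inject into F
  have hcross : ∀ z : (Fin 2 × Fin n) × (Fin 2 × Fin n),
      z ∈ (A ×ˢ Aᶜ).filter (fun z => (K2timesKn n).Adj z.1 z.2) → s(z.1, z.2) ∈ F := by
    rintro ⟨zx, zy⟩ hz
    rw [Finset.mem_filter, Finset.mem_product] at hz
    obtain ⟨⟨hzx, hzy⟩, hadj⟩ := hz
    by_contra hnot
    have hadj' : G'.Adj zx zy := SimpleGraph.deleteEdges_adj.2 ⟨hadj, hnot⟩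
    have : zy ∈ A := by
      rw [hAmem]
      rw [← (hAmem zx).1 hzx]
      exact (SimpleGraph.ConnectedComponent.eq.2 hadj'.symm.reachable)
    exact (Finset.mem_compl.1 hzy) this
  have hinj : Set.InjOn (fun z : (Fin 2 × Fin n) × (Fin 2 × Fin n) => s(z.1, z.2))
      ((A ×ˢ Aᶜ).filter (fun z => (K2timesKn n).Adj z.1 z.2)) := by
    rintro ⟨ax, ay⟩ ha ⟨bx, by'⟩ hb h
    simp only [Finset.coe_filter, Finset.mem_coe, Set.mem_setOf_eq, Finset.mem_product] at ha hb
    rcases Sym2.eq_iff.1 h with ⟨h1, h2⟩ | ⟨h1, h2⟩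
    · have h1' : ax = bx := h1
      have h2' : ay = by' := h2
      rw [h1', h2']
    · exfalso
      have hax : ax ∈ Aᶜ := by
        have h1' : ax = by' := h1
        rw [h1']
        exact hb.1.2
      exact (Finset.mem_compl.1 hax) ha.1.1
  have himcard : ((A ×ˢ Aᶜ).filter (fun z => (K2timesKn n).Adj z.1 z.2)).card
      = (((A ×ˢ Aᶜ).filter (fun z => (K2timesKn n).Adj z.1 z.2)).image
          (fun z => s(z.1, z.2))).card := (Finset.card_image_of_injOn hinj).symm
  have hsubF : ((A ×ˢ Aᶜ).filter (fun z => (K2timesKn n).Adj z.1 z.2)).image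
      (fun z => s(z.1, z.2)) ⊆ F := by
    intro e he
    obtain ⟨z, hz, rfl⟩ := Finset.mem_image.1 he
    exact hcross z hz
  have hcm := count_main hn A h2 h2c
  have hDle : ((A ×ˢ Aᶜ).filter (fun z => (K2timesKn n).Adj z.1 z.2)).card ≤ 2*n-4 := by
    calc _ = _ := himcard
    _ ≤ F.card := Finset.card_le_card hsubF
    _ ≤ 2*n-4 := hle
  obtain ⟨u, v, huv, hAuv⟩ := hcm.2 hDle
  -- F is exactly the crossing edge set
  have hFeq : ((A ×ˢ Aᶜ).filter (fun z => (K2timesKn n).Adj z.1 z.2)).image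
      (fun z => s(z.1, z.2)) = F := by
    apply Finset.eq_of_subset_of_card_le hsubF
    rw [← himcard]
    omega
  -- the edge uv is not deleted
  have hnotF : s(u, v) ∉ F := by
    intro hmem
    rw [← hFeq] at hmem
    obtain ⟨⟨zx, zy⟩, hz, hzz⟩ := Finset.mem_image.1 hmem
    rw [Finset.mem_filter, Finset.mem_product] at hz
    obtain ⟨⟨hzx, hzy⟩, -⟩ := hz
    rcases hAuv with hAeq | hAeq
    · have hmemA : zy ∈ A := by
        rcases Sym2.eq_iff.1 hzz with ⟨h1, h2⟩ | ⟨h1, h2⟩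
        · have h2' : zy = v := h2
          rw [hAeq, h2']; simp
        · have h2' : zy = u := h2
          rw [hAeq, h2']; simp
      exact (Finset.mem_compl.1 hzy) hmemA
    · have hmemAc : zx ∈ Aᶜ := by
        rcases Sym2.eq_iff.1 hzz with ⟨h1, h2⟩ | ⟨h1, h2⟩
        · have h1' : zx = u := h1
          rw [hAeq, h1']; simp
        · have h1' : zx = v := h1
          rw [hAeq, h1']; simp
      exact (Finset.mem_compl.1 hmemAc) hzx
  have hadj' : G'.Adj u v := SimpleGraph.deleteEdges_adj.2 ⟨huv, hnotF⟩
  refine ⟨u, v, hadj', ?_⟩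
  rcases hAuv with hAeq | hAeq
  · -- the component of u is A = {u, v}
    have huA : u ∈ A := by rw [hAeq]; simp
    have hcu : G'.connectedComponentMk u = c := (hAmem u).1 huA
    rw [hcu]
    ext z
    rw [Set.mem_insert_iff, Set.mem_singleton_iff]
    have hzc : z ∈ c.supp ↔ z ∈ A :=
      (SimpleGraph.ConnectedComponent.mem_supp_iff c z).trans (hAmem z).symm
    rw [hzc, hAeq]
    simp
  · -- the component of u is Aᶜ = {u, v}
    have huA : u ∉ A := by
      have : u ∈ Aᶜ := by rw [hAeq]; simp
      exact Finset.mem_compl.1 this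
    ext z
    rw [Set.mem_insert_iff, Set.mem_singleton_iff]
    constructor
    · intro hz
      rw [SimpleGraph.ConnectedComponent.mem_supp_iff] at hz
      have hzA : z ∉ A := by
        intro hzA
        apply huA
        rw [hAmem] at hzA ⊢
        rw [← hz]
        exact hzA
      have : z ∈ Aᶜ := Finset.mem_compl.2 hzA
      rw [hAeq] at this
      simpa using this
    · rintro (rfl | rfl)
      · exact (SimpleGraph.ConnectedComponent.mem_supp_iff _ _).2 rfl
      · exact (SimpleGraph.ConnectedComponent.mem_supp_iff _ _).2
          (SimpleGraph.ConnectedComponent.eq.2 hadj'.symm.reachable)
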